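/- Let n ≥ 3 be an integer, A = {0, n, n+1}, t a positive integer, and h_t = t·(n+1) − 2. Then every element p of ((h_t − 1)A)^{(t)} satisfies 0 ≤ p ≤ t·n·(n+1) − 2·(n+1); that is, ((h_t − 1)A)^{(t)} ⊆ [0, t·n·(n+1) − 2·(n+1)]. -/

import Mathlib

/-- `f : Fin h → ℤ` is a representation of `n` as a sum of `h` elements of `A`
(written in nondecreasing order). -/
def IsRep (A : Set ℤ) (h : ℕ) (n : ℤ) (f : Fin h → ℤ) : Prop :=
  (∀ i, f i ∈ A) ∧ Monotone f ∧ ∑ i, f i = n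

/-- `(hA)^{(t)}`: integers having at least `t` representations as a sum of `h`
elements of `A`. -/
def hFoldT (A : Set ℤ) (h t : ℕ) : Set ℤ :=
  {n | ∃ S : Finset (Fin h → ℤ), t ≤ S.card ∧ ∀ f ∈ S, IsRep A h n f}

lemma lowerSet_mem_iff {h : ℕ} {P : Finset (Fin h)}
    (hP : ∀ ⦃i j : Fin h⦄, j ≤ i → i ∈ P → j ∈ P) (i : Fin h) :
    i ∈ P ↔ (i : ℕ) < P.card := by
  constructor
  · intro hi
    have hsub : Finset.Iic i ⊆ P := fun j hj => hP (Finset.mem_Iic.mp hj) hi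
    have hle := Finset.card_le_card hsub
    rw [Fin.card_Iic] at hle
    omega
  · intro hi
    by_contra hni
    have hsub : P ⊆ Finset.Iio i := by
      intro j hj
      rw [Finset.mem_Iio]
      by_contra hji
      exact hni (hP (not_lt.mp hji) hj)
    have hle := Finset.card_le_card hsub
    rw [Fin.card_Iio] at hle
    omega

lemma upperSet_mem_iff {h : ℕ} {Q : Finset (Fin h)}
    (hQ : ∀ ⦃i j : Fin h⦄, i ≤ j → i ∈ Q → j ∈ Q) (i : Fin h) :
    i ∈ Q ↔ h ≤ (i : ℕ) + Q.card := by
  have hih : (i : ℕ) < h := i.isLt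
  constructor
  · intro hi
    have hsub : Finset.Ici i ⊆ Q := fun j hj => hQ (Finset.mem_Ici.mp hj) hi
    have hle := Finset.card_le_card hsub
    rw [Fin.card_Ici] at hle
    omega
  · intro hi
    by_contra hni
    have hsub : Q ⊆ Finset.Ioi i := by
      intro j hj
      rw [Finset.mem_Ioi]
      by_contra hji
      exact hni (hQ (not_lt.mp hji) hj)
    have hle := Finset.card_le_card hsub
    rw [Fin.card_Ioi] at hle
    omega

/-- Number of nonzero entries of `f`. -/
def sVal {h : ℕ} (f : Fin h → ℤ) : ℕ :=
  (Finset.univ.filter (fun i => f i ≠ 0)).card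

lemma rep_struct (n : ℕ) (hn : 3 ≤ n) (h : ℕ) (p : ℤ) (f : Fin h → ℤ)
    (hf : IsRep {0, (n : ℤ), (n : ℤ) + 1} h p f) :
    ∃ c : ℕ, c ≤ sVal f ∧ sVal f ≤ h ∧ p = (sVal f : ℤ) * n + c ∧
      ∀ i : Fin h, f i =
        if (i : ℕ) + sVal f < h then 0 else if (i : ℕ) + c < h then (n : ℤ) else (n : ℤ) + 1 := by
  obtain ⟨hmem, hmono, hsum⟩ := hf
  have hmem' : ∀ i, f i = 0 ∨ f i = n ∨ f i = (n : ℤ) + 1 := by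
    intro i
    have := hmem i
    simpa [Set.mem_insert_iff] using this
  have hn3 : (3 : ℤ) ≤ n := by exact_mod_cast hn
  set P0 : Finset (Fin h) := Finset.univ.filter (fun i => f i = 0) with hP0
  set Pne : Finset (Fin h) := Finset.univ.filter (fun i => f i ≠ 0) with hPne
  set Pn : Finset (Fin h) := Finset.univ.filter (fun i => f i = n) with hPn
  set Q : Finset (Fin h) := Finset.univ.filter (fun i => f i = (n : ℤ) + 1) with hQ
  refine ⟨Q.card, ?_, ?_, ?_, ?_⟩
  · -- c ≤ s
    apply Finset.card_le_card
    intro i hi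
    simp only [hQ, hPne, Finset.mem_filter, Finset.mem_univ, true_and] at hi ⊢
    rw [hi]; intro hz; omega
  · -- s ≤ h
    have := Finset.card_le_univ Pne
    show Pne.card ≤ h
    simpa using this
  · -- sum formula
    have hdisj : Disjoint Pn Q := by
      rw [Finset.disjoint_left]
      intro i hi1 hi2
      simp only [hPn, hQ, Finset.mem_filter, Finset.mem_univ, true_and] at hi1 hi2
      rw [hi1] at hi2; omega
    have hunion : Pne = Pn ∪ Q := by
      ext i
      simp only [hPne, hPn, hQ, Finset.mem_filter, Finset.mem_univ, true_and, Finset.mem_union]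
      constructor
      · intro hne
        rcases hmem' i with h0 | h1 | h2
        · exact absurd h0 hne
        · exact Or.inl h1
        · exact Or.inr h2
      · intro hc hz
        rcases hc with h1 | h2
        · rw [hz] at h1; omega
        · rw [hz] at h2; omega
    have hsplit : ∑ i ∈ P0, f i + ∑ i ∈ Pne, f i = p := by
      rw [← hsum, hP0, hPne]
      exact Finset.sum_filter_add_sum_filter_not _ _ _
    have hs0 : ∑ i ∈ P0, f i = 0 := by
      apply Finset.sum_eq_zero
      intro i hi
      simpa [hP0] using (Finset.mem_filter.mp hi).2
    have hsn : ∑ i ∈ Pn, f i = (Pn.card : ℤ) * n := by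
      rw [Finset.sum_congr rfl (fun i hi => (Finset.mem_filter.mp hi).2),
        Finset.sum_const, nsmul_eq_mul]
    have hsq : ∑ i ∈ Q, f i = (Q.card : ℤ) * ((n : ℤ) + 1) := by
      rw [Finset.sum_congr rfl (fun i hi => (Finset.mem_filter.mp hi).2),
        Finset.sum_const, nsmul_eq_mul]
    have hcard : sVal f = Pn.card + Q.card := by
      show Pne.card = _
      rw [hunion, Finset.card_union_of_disjoint hdisj]
    rw [hunion, Finset.sum_union hdisj, hsn, hsq] at hsplit
    rw [hcard]
    push_cast
    linarith [hsplit, hs0]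
  · -- pointwise formula
    have hcard2 : P0.card + sVal f = h := by
      have := Finset.card_filter_add_card_filter_not (s := Finset.univ)
        (p := fun i : Fin h => f i = 0)
      simp only [Finset.card_univ, Fintype.card_fin] at this
      exact this
    have hP0low : ∀ ⦃i j : Fin h⦄, j ≤ i → i ∈ P0 → j ∈ P0 := by
      intro i j hji hi
      simp only [hP0, Finset.mem_filter, Finset.mem_univ, true_and] at hi ⊢
      have h1 : f j ≤ f i := hmono hji
      rcases hmem' j with h0 | h1' | h2' <;> [exact h0; omega; omega]
    have hQup : ∀ ⦃i j : Fin h⦄, i ≤ j → i ∈ Q → j ∈ Q := by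
      intro i j hij hi
      simp only [hQ, Finset.mem_filter, Finset.mem_univ, true_and] at hi ⊢
      have h1 : f i ≤ f j := hmono hij
      rcases hmem' j with h0 | h1' | h2' <;> [omega; omega; exact h2']
    intro i
    by_cases h1 : (i : ℕ) + sVal f < h
    · have : i ∈ P0 := (lowerSet_mem_iff hP0low i).mpr (by omega)
      simp only [hP0, Finset.mem_filter, Finset.mem_univ, true_and] at this
      simp [h1, this]
    · have hnP0 : i ∉ P0 := fun hc => h1 (by
        have := (lowerSet_mem_iff hP0low i).mp hc; omega)
      have hfne : f i ≠ 0 := by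
        intro hc
        exact hnP0 (by simp [hP0, hc])
      by_cases h2 : (i : ℕ) + Q.card < h
      · have hnQ : i ∉ Q := fun hc => by
          have := (upperSet_mem_iff hQup i).mp hc; omega
        have hfne2 : f i ≠ (n : ℤ) + 1 := by
          intro hc
          exact hnQ (by simp [hQ, hc])
        rcases hmem' i with h0 | h1' | h2'
        · exact absurd h0 hfne
        · rw [h1', if_neg h1, if_pos h2]
        · exact absurd h2' hfne2
      · have : i ∈ Q := (upperSet_mem_iff hQup i).mpr (by omega)
        simp only [hQ, Finset.mem_filter, Finset.mem_univ, true_and] at this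
        simp [h1, h2, this]

lemma stmt8_aux (n : ℕ) (hn : 3 ≤ n) (t : ℕ) (ht : 0 < t) (h : ℕ)
    (hh : h = t * (n + 1) - 3) :
    hFoldT {0, (n : ℤ), (n : ℤ) + 1} h t ⊆
      Set.Icc (0 : ℤ) ((t : ℤ) * n * (n + 1) - 2 * (n + 1)) := by
  intro p hp
  obtain ⟨S, hScard, hSrep⟩ := hp
  have hmul : t * (n + 1) = t * n + t := by ring
  have htn : 3 ≤ t * n := le_trans hn (Nat.le_mul_of_pos_left n ht)
  have hhval : h = t * n + t - 3 := by omega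
  -- structural data for each rep
  have hstruct : ∀ f ∈ S, ∃ c : ℕ, c ≤ sVal f ∧ sVal f ≤ h ∧
      p = (sVal f : ℤ) * n + c ∧
      ∀ i : Fin h, f i =
        if (i : ℕ) + sVal f < h then 0 else if (i : ℕ) + c < h then (n : ℤ) else (n : ℤ) + 1 :=
    fun f hf => rep_struct n hn h p f (hSrep f hf)
  -- injectivity of sVal on S
  have hinj : Set.InjOn sVal (S : Set (Fin h → ℤ)) := by
    intro f hf g hg hfg
    obtain ⟨cf, _, _, hpf, hforf⟩ := hstruct f hf
    obtain ⟨cg, _, _, hpg, hforg⟩ := hstruct g hg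
    have hceq : cf = cg := by
      have : (cf : ℤ) = (cg : ℤ) := by rw [hfg] at hpf; linarith
      exact_mod_cast this
    funext i
    rw [hforf i, hforg i, hfg, hceq]
  have himage : t ≤ (S.image sVal).card := by
    rw [Finset.card_image_of_injOn hinj]
    exact hScard
  -- lower bound
  have hS0 : S.Nonempty := Finset.card_pos.mp (lt_of_lt_of_le ht hScard)
  obtain ⟨f0, hf0⟩ := hS0
  obtain ⟨c0, _, _, hp0, _⟩ := hstruct f0 hf0
  have hplb : 0 ≤ p := by rw [hp0]; positivity
  constructor
  · exact hplb
  -- upper bound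
  by_contra hub
  push_neg at hub
  have hub' : ((n : ℤ) + 1) * ((t : ℤ) * n - 2) + 1 ≤ p := by linarith [hub]
  -- every s in the image lies in [t*n - 1, h]
  have hsub : S.image sVal ⊆ Finset.Icc (t * n - 1) h := by
    intro s hs
    obtain ⟨f, hf, rfl⟩ := Finset.mem_image.mp hs
    obtain ⟨c, hcs, hsh, hpf, _⟩ := hstruct f hf
    rw [Finset.mem_Icc]
    refine ⟨?_, hsh⟩
    -- p ≤ s * (n+1)
    have h1 : p ≤ (sVal f : ℤ) * ((n : ℤ) + 1) := by
      have : (c : ℤ) ≤ (sVal f : ℤ) := by exact_mod_cast hcs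
      rw [hpf]; ring_nf; linarith
    have h2 : ((t : ℤ) * n - 2) < (sVal f : ℤ) := by
      by_contra hcon
      push_neg at hcon
      have := mul_le_mul_of_nonneg_right hcon (by linarith : (0 : ℤ) ≤ (n : ℤ) + 1)
      nlinarith
    have h3 : (t * n : ℕ) ≤ sVal f + 1 := by
      have : ((t * n : ℕ) : ℤ) ≤ ((sVal f + 1 : ℕ) : ℤ) := by push_cast; linarith
      exact_mod_cast this
    omega
  have hcard := Finset.card_le_card hsub
  rw [Nat.card_Icc] at hcard
  omega

theorem stmt8 (n : ℕ) (hn : 3 ≤ n) (t : ℕ) (ht : 0 < t) :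
    hFoldT {0, (n : ℤ), (n : ℤ) + 1} (t * (n + 1) - 3) t ⊆
      Set.Icc (0 : ℤ) ((t : ℤ) * n * (n + 1) - 2 * (n + 1)) :=
  stmt8_aux n hn t ht _ rfl
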